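/- With M : 𝔽₂^6 → 𝔽₂^3 the linear map with rows (0,0,1,1,1,1), (1,1,0,0,1,1), (1,1,1,1,0,0), and Q ⊆ 𝔽₂^6 the subspace spanned by (1,1,0,0,0,0), (0,0,1,1,0,0), (0,0,0,0,1,1), the quotient ker(M)/Q is one-dimensional over 𝔽₂, generated by the class of (1,0,1,0,1,0). -/
import Mathlib


/-- The matrix of the map `𝒫 → 𝓡` in the Brauer group computation for the
Hassett–Pirutka–Tschinkel example. -/
def HPTmatrix : Matrix (Fin 3) (Fin 6) (ZMod 2) :=
  !![0,0,1,1,1,1; 1,1,0,0,1,1; 1,1,1,1,0,0]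

/-- The subspace `𝒬 ⊆ 𝔽₂⁶` spanned by `(1,1,0,0,0,0)`, `(0,0,1,1,0,0)`, `(0,0,0,0,1,1)`. -/
def HPTQ : Submodule (ZMod 2) (Fin 6 → ZMod 2) :=
  Submodule.span (ZMod 2) {![1,1,0,0,0,0], ![0,0,1,1,0,0], ![0,0,0,0,1,1]}

lemma vec6_five {α : Type*} (a b c d e f : α) : ![a,b,c,d,e,f] 5 = f := rfl

/-- The subspace of vectors with pairwise equal coordinates. -/
def HPTS : Submodule (ZMod 2) (Fin 6 → ZMod 2) where
  carrier := {v | v 0 = v 1 ∧ v 2 = v 3 ∧ v 4 = v 5}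
  add_mem' := by rintro a b ⟨h1,h2,h3⟩ ⟨g1,g2,g3⟩; exact ⟨by simp [h1,g1], by simp [h2,g2], by simp [h3,g3]⟩
  zero_mem' := by simp
  smul_mem' := by rintro c a ⟨h1,h2,h3⟩; exact ⟨by simp [h1], by simp [h2], by simp [h3]⟩

lemma mem_HPTQ (v : Fin 6 → ZMod 2) : v ∈ HPTQ ↔ (v 0 = v 1 ∧ v 2 = v 3 ∧ v 4 = v 5) := by
  constructor
  · intro h
    have : HPTQ ≤ HPTS := by
      rw [HPTQ, Submodule.span_le]
      rintro x (rfl | rfl | rfl) <;> exact ⟨by decide, by decide, by decide⟩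
    exact this h
  · rintro ⟨h1, h2, h3⟩
    have : v = v 0 • ![1,1,0,0,0,0] + v 2 • ![0,0,1,1,0,0] + v 4 • ![0,0,0,0,1,1] := by
      funext i
      fin_cases i <;> simp [h1, h2, h3, vec6_five]
    rw [this]
    refine Submodule.add_mem _ (Submodule.add_mem _ ?_ ?_) ?_ <;>
      exact Submodule.smul_mem _ _ (Submodule.subset_span (by simp))
lemma mem_ker_iff (v : Fin 6 → ZMod 2) :
    v ∈ LinearMap.ker HPTmatrix.mulVecLin ↔
      (v 2 + v 3 + v 4 + v 5 = 0 ∧ v 0 + v 1 + v 4 + v 5 = 0 ∧ v 0 + v 1 + v 2 + v 3 = 0) := by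
  rw [LinearMap.mem_ker, Matrix.mulVecLin_apply, funext_iff, Fin.forall_fin_succ,
    Fin.forall_fin_succ, Fin.forall_fin_succ]
  simp [HPTmatrix, Matrix.mulVec, dotProduct, Fin.sum_univ_six, vec6_five]

/-- `ker(M)/Q` is one-dimensional over `𝔽₂`, generated by the class of `(1,0,1,0,1,0)`:
`Q ⊆ ker M`, the vector `(1,0,1,0,1,0)` lies in `ker M` but not in `Q`, and every element
of `ker M` is congruent mod `Q` either to `0` or to `(1,0,1,0,1,0)`. -/
theorem HPT_kernel_mod_Q_one_dimensional :
    HPTQ ≤ LinearMap.ker HPTmatrix.mulVecLin ∧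
    ![1,0,1,0,1,0] ∈ LinearMap.ker HPTmatrix.mulVecLin ∧
    ![1,0,1,0,1,0] ∉ HPTQ ∧
    ∀ w ∈ LinearMap.ker HPTmatrix.mulVecLin, w ∈ HPTQ ∨ w - ![1,0,1,0,1,0] ∈ HPTQ := by
  refine ⟨?_, ?_, ?_, ?_⟩
  · intro v hv
    rw [mem_HPTQ] at hv
    rw [mem_ker_iff]
    obtain ⟨h1, h2, h3⟩ := hv
    revert h1 h2 h3
    generalize v 0 = a; generalize v 1 = b; generalize v 2 = c
    generalize v 3 = d; generalize v 4 = e; generalize v 5 = f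
    revert a b c d e f
    decide
  · rw [mem_ker_iff]; decide
  · rw [mem_HPTQ]; decide
  · intro w hw
    rw [mem_ker_iff] at hw
    rw [mem_HPTQ, mem_HPTQ]
    simp only [Pi.sub_apply]
    obtain ⟨h1, h2, h3⟩ := hw
    revert h1 h2 h3
    generalize w 0 = a; generalize w 1 = b; generalize w 2 = c
    generalize w 3 = d; generalize w 4 = e; generalize w 5 = f
    revert a b c d e f
    decide
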